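/- Let k > 0, θ > 0 and Δ ≥ 0, and define g_m(x) = (1/2) · ∫_0^∞ t · ( t^{k−1}·exp(−t/θ) / (Γ(k)·θ^k) ) · exp(−t·|x − m|) dt, i.e., the compound Laplace density whose inverse scale parameter is Gamma(k, θ)-distributed (explicitly g_m(x) = (k·θ/2)·(1 + θ·|x − m|)^{−(k+1)}). Then for all m, m' ∈ ℝ with |m − m'| ≤ Δ and every measurable S ⊆ ℝ, ∫_S g_m(x) dx ≤ (1 + θ·Δ)^{k+1} · ∫_S g_{m'}(x) dx. That is, the R²DP Laplace mechanism with Gamma-distributed reciprocal scale satisfies ( (k+1)·ln(1 + Δq·θ) )-differential privacy. -/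

import Mathlib

open MeasureTheory Real

/-- The inner (Gamma-mixture) integral evaluates to the closed form
`k·θ·(1 + θ·c)^{-(k+1)}`. -/
lemma r2dp_inner_eq (k θ c : ℝ) (hk : 0 < k) (hθ : 0 < θ) (hc : 0 ≤ c) :
    (∫ t in Set.Ioi (0 : ℝ),
        t * (t ^ (k - 1) * Real.exp (-t / θ) / (Real.Gamma k * θ ^ k)) *
          Real.exp (-t * c))
      = k * θ * (1 + θ * c) ^ (-(k + 1)) := by
  have hΓ : (0 : ℝ) < Real.Gamma k := Real.Gamma_pos_of_pos hk
  have hθk : (0 : ℝ) < θ ^ k := Real.rpow_pos_of_pos hθ k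
  have hb : (0 : ℝ) < 1 / θ + c := by positivity
  have h1θc : (0 : ℝ) < 1 + θ * c := by positivity
  have hstep : ∀ t ∈ Set.Ioi (0 : ℝ),
      t * (t ^ (k - 1) * Real.exp (-t / θ) / (Real.Gamma k * θ ^ k)) *
          Real.exp (-t * c)
        = (Real.Gamma k * θ ^ k)⁻¹ *
            (t ^ ((k + 1) - 1) * Real.exp (-((1 / θ + c) * t))) := by
    intro t ht
    have ht0 : (0 : ℝ) < t := ht
    have h1 : t ^ ((k + 1) - 1) = t ^ (k - 1) * t := by
      rw [show (k + 1) - 1 = (k - 1) + 1 by ring, Real.rpow_add_one ht0.ne']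
    have h2 : Real.exp (-((1 / θ + c) * t))
        = Real.exp (-t / θ) * Real.exp (-t * c) := by
      rw [← Real.exp_add]
      congr 1
      field_simp
      ring
    rw [h1, h2]
    ring
  rw [setIntegral_congr_fun measurableSet_Ioi hstep, integral_const_mul,
    integral_rpow_mul_exp_neg_mul_Ioi (by linarith : (0:ℝ) < k + 1) hb,
    Real.Gamma_add_one hk.ne']
  have hdiv : 1 / (1 / θ + c) = θ / (1 + θ * c) := by
    rw [div_eq_div_iff hb.ne' h1θc.ne']
    field_simp
  rw [hdiv, Real.div_rpow hθ.le h1θc.le, Real.rpow_neg h1θc.le,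
    Real.rpow_add_one hθ.ne' k]
  have h1θckp : (0 : ℝ) < (1 + θ * c) ^ (k + 1) :=
    Real.rpow_pos_of_pos h1θc _
  field_simp

/-- Integrability of the closed-form density over `ℝ`. -/
lemma r2dp_integrable (k θ : ℝ) (hk : 0 < k) (hθ : 0 < θ) (m : ℝ) :
    Integrable (fun y : ℝ => (1 + θ * |y - m|) ^ (-(k + 1))) := by
  have h0 : Integrable (fun x : ℝ => (1 + ‖x‖) ^ (-(k + 1))) := by
    apply integrable_one_add_norm
    simp only [Module.finrank_self, Nat.cast_one]
    linarith
  have h1 : Integrable (fun x : ℝ => (1 + ‖θ * x‖) ^ (-(k + 1))) := by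
    exact (integrable_comp_mul_left_iff
      (fun x : ℝ => (1 + ‖x‖) ^ (-(k + 1))) hθ.ne').2 h0
  have h2 : Integrable ((fun x : ℝ => (1 + ‖θ * x‖) ^ (-(k + 1))) ∘
      (fun y : ℝ => y - m)) := by
    refine ((measurePreserving_sub_right volume m).integrable_comp ?_).2 h1
    exact h1.aestronglyMeasurable
  simpa [Function.comp_def, Real.norm_eq_abs, abs_mul, abs_of_pos hθ] using h2

/-- The R²DP Laplace mechanism with Gamma(k, θ)-distributed reciprocal scale satisfies
`(k+1)·ln(1 + Δq·θ)`-differential privacy. -/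
theorem r2dp_gamma_dp (k θ Δ : ℝ) (hk : 0 < k) (hθ : 0 < θ) (hΔ : 0 ≤ Δ)
    (m m' : ℝ) (hmm : |m - m'| ≤ Δ) (S : Set ℝ) (hS : MeasurableSet S) :
    (∫ y in S, (1 / 2) * ∫ t in Set.Ioi (0 : ℝ),
        t * (t ^ (k - 1) * Real.exp (-t / θ) / (Real.Gamma k * θ ^ k)) *
          Real.exp (-t * |y - m|)) ≤
      (1 + θ * Δ) ^ (k + 1) *
        ∫ y in S, (1 / 2) * ∫ t in Set.Ioi (0 : ℝ),
          t * (t ^ (k - 1) * Real.exp (-t / θ) / (Real.Gamma k * θ ^ k)) *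
            Real.exp (-t * |y - m'|) := by
  have hC : (0 : ℝ) < 1 + θ * Δ := by positivity
  have hrw : ∀ mm : ℝ,
      (∫ y in S, (1 / 2) * ∫ t in Set.Ioi (0 : ℝ),
          t * (t ^ (k - 1) * Real.exp (-t / θ) / (Real.Gamma k * θ ^ k)) *
            Real.exp (-t * |y - mm|))
        = ∫ y in S, (1 / 2) * (k * θ * (1 + θ * |y - mm|) ^ (-(k + 1))) := by
    intro mm
    refine setIntegral_congr_fun hS (fun y _ => ?_)
    rw [r2dp_inner_eq k θ |y - mm| hk hθ (abs_nonneg _)]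
  rw [hrw m, hrw m', ← integral_const_mul]
  have hint : ∀ mm : ℝ, IntegrableOn
      (fun y : ℝ => (1 / 2) * (k * θ * (1 + θ * |y - mm|) ^ (-(k + 1)))) S := by
    intro mm
    exact (((r2dp_integrable k θ hk hθ mm).const_mul (k * θ)).const_mul
      (1 / 2)).integrableOn
  refine setIntegral_mono_on (hint m) ((hint m').const_mul _) hS (fun y _ => ?_)
  have hA : (0 : ℝ) < 1 + θ * |y - m| := by positivity
  have hB : (0 : ℝ) < 1 + θ * |y - m'| := by positivity
  have hBA : 1 + θ * |y - m'| ≤ (1 + θ * Δ) * (1 + θ * |y - m|) := by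
    have h1 : |y - m'| ≤ |y - m| + Δ := by
      calc |y - m'| = |(y - m) + (m - m')| := by ring_nf
        _ ≤ |y - m| + |m - m'| := abs_add_le _ _
        _ ≤ |y - m| + Δ := by linarith
    nlinarith [mul_le_mul_of_nonneg_left h1 hθ.le,
      mul_nonneg (mul_nonneg hθ.le hΔ) (mul_nonneg hθ.le (abs_nonneg (y - m)))]
  have key : (1 + θ * |y - m|) ^ (-(k + 1))
      ≤ (1 + θ * Δ) ^ (k + 1) * (1 + θ * |y - m'|) ^ (-(k + 1)) := by
    rw [Real.rpow_neg hA.le, Real.rpow_neg hB.le, inv_eq_one_div, inv_eq_one_div,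
      mul_one_div, div_le_div_iff₀ (by positivity) (by positivity)]
    calc 1 * (1 + θ * |y - m'|) ^ (k + 1)
        = (1 + θ * |y - m'|) ^ (k + 1) := one_mul _
      _ ≤ ((1 + θ * Δ) * (1 + θ * |y - m|)) ^ (k + 1) :=
          Real.rpow_le_rpow hB.le hBA (by linarith)
      _ = (1 + θ * Δ) ^ (k + 1) * (1 + θ * |y - m|) ^ (k + 1) :=
          Real.mul_rpow hC.le hA.le
  calc (1 / 2) * (k * θ * (1 + θ * |y - m|) ^ (-(k + 1)))
      = (k * θ / 2) * (1 + θ * |y - m|) ^ (-(k + 1)) := by ring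
    _ ≤ (k * θ / 2) * ((1 + θ * Δ) ^ (k + 1) * (1 + θ * |y - m'|) ^ (-(k + 1))) :=
        mul_le_mul_of_nonneg_left key (by positivity)
    _ = (1 + θ * Δ) ^ (k + 1) *
          ((1 / 2) * (k * θ * (1 + θ * |y - m'|) ^ (-(k + 1)))) := by ring
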